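/- arXiv:2307.08021 — 2 statements merged into one kernel-verified Lean document; each statement's English description precedes it below -/
import Mathlib

section
/- For every subset Z ⊆ X_1 and every f ∈ C(X_1,ℝ), the a-weighted topological pressure satisfies P^a(T_1,Z,f) = sup_{{U_i}} P^a(T_1,Z,{U_i},f) = lim_{max_{1≤i≤k} diam U_i → 0} P^a(T_1,Z,{U_i},f), where the supremum and limit are taken over all tuples of open covers U_i of X_i, i=1,…,k. -/
set_option maxHeartbeats 1000000


open MeasureTheory Set Filter Topology
open scoped ENNReal symmDiff

namespace WTP

variable {k : ℕ}

/-- cumulative weight `a 1 + … + a i` (zero-indexed: `a 0 + … + a i`). -/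
noncomputable def cw (a : Fin k → ℝ) (i : Fin k) : ℝ := ∑ j ∈ Finset.Iic i, a j

/-- Birkhoff sum `S_n f = ∑_{l<n} f ∘ T^l`. -/
noncomputable def birk {X : Type*} (T : X → X) (f : X → ℝ) (n : ℕ) (x : X) : ℝ :=
  ∑ l ∈ Finset.range n, f (T^[l] x)

/-- a (finite) open cover of a topological space. -/
def IsOpenCover {X : Type*} [TopologicalSpace X] (𝒰 : Set (Set X)) : Prop :=
  𝒰.Finite ∧ (∀ U ∈ 𝒰, IsOpen U) ∧ ⋃₀ 𝒰 = Set.univ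

/-- pullback of a cover along a map. -/
def pullCov {X Y : Type*} (g : X → Y) (𝒰 : Set (Set Y)) : Set (Set X) :=
  (fun U => g ⁻¹' U) '' 𝒰

/-- the quantity `exp(−s·n + (1/a₁)·sup_{x∈A} S_{⌈a₁ n⌉} f(x))`, as an element of `ℝ≥0∞`. -/
noncomputable def pterm {X : Type*} (T1 : X → X) (f : X → ℝ) (a1 s : ℝ) (n : ℕ)
    (A : Set X) : ℝ≥0∞ :=
  ENNReal.ofReal (Real.exp (-(s * n) + (1 / a1) * sSup (birk T1 f ⌈a1 * (n : ℝ)⌉₊ '' A)))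

/-- the weighted Bowen ball `B_n^𝐚(x, ε)`. -/
def wBowen {X : Fin k → Type*} [∀ i, MetricSpace (X i)] {X1 : Type*}
    (T : ∀ i, X i → X i) (τ : ∀ i, X1 → X i) (a : Fin k → ℝ)
    (n : ℕ) (x : X1) (ε : ℝ) : Set X1 :=
  {y | ∀ i : Fin k, ∀ j < ⌈cw a i * (n : ℝ)⌉₊,
      dist ((T i)^[j] (τ i x)) ((T i)^[j] (τ i y)) < ε}

section Bowen

variable [NeZero k] {X : Fin k → Type*} [∀ i, MetricSpace (X i)] {X1 : Type*}
  [MeasurableSpace X1]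

/-- `Λ^{𝐚,s}_{N,ε}(Z,f)`. -/
noncomputable def lamBowenN (T1 : X1 → X1) (T : ∀ i, X i → X i) (τ : ∀ i, X1 → X i)
    (a : Fin k → ℝ) (f : X1 → ℝ) (s ε : ℝ) (N : ℕ) (Z : Set X1) : ℝ≥0∞ :=
  ⨅ (D : Set (ℕ × Set X1)) (_ : D.Countable)
    (_ : ∀ p ∈ D, N ≤ p.1 ∧ MeasurableSet p.2 ∧ ∃ x : X1, p.2 ⊆ wBowen T τ a p.1 x ε)
    (_ : Z ⊆ ⋃ p ∈ D, p.2),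
    ∑' p : D, pterm T1 f (a 0) s p.1.1 p.1.2

/-- `Λ^{𝐚,s}_{ε}(Z,f) = lim_{N→∞} Λ^{𝐚,s}_{N,ε}(Z,f)` (an increasing limit). -/
noncomputable def lamBowen (T1 : X1 → X1) (T : ∀ i, X i → X i) (τ : ∀ i, X1 → X i)
    (a : Fin k → ℝ) (f : X1 → ℝ) (s ε : ℝ) (Z : Set X1) : ℝ≥0∞ :=
  ⨆ N : ℕ, lamBowenN T1 T τ a f s ε N Z

/-- `P^𝐚(T₁, Z, ε, f) = inf {s : Λ^{𝐚,s}_ε(Z,f) = 0}`. -/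
noncomputable def PBowenEps (T1 : X1 → X1) (T : ∀ i, X i → X i) (τ : ∀ i, X1 → X i)
    (a : Fin k → ℝ) (Z : Set X1) (f : X1 → ℝ) (ε : ℝ) : EReal :=
  sInf (Real.toEReal '' {s : ℝ | lamBowen T1 T τ a f s ε Z = 0})

/-- the 𝐚-weighted topological pressure `P^𝐚(T₁, Z, f) = lim_{ε→0} P^𝐚(T₁, Z, ε, f)`
(an increasing limit as `ε` decreases to `0`). -/
noncomputable def PBowen (T1 : X1 → X1) (T : ∀ i, X i → X i) (τ : ∀ i, X1 → X i)
    (a : Fin k → ℝ) (Z : Set X1) (f : X1 → ℝ) : EReal :=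
  ⨆ ε : {e : ℝ // 0 < e}, PBowenEps T1 T τ a Z f ε.1

/-- `W^{𝐚,s}_{N,ε}(Z,f)`. -/
noncomputable def wBowenWN (T1 : X1 → X1) (T : ∀ i, X i → X i) (τ : ∀ i, X1 → X i)
    (a : Fin k → ℝ) (f : X1 → ℝ) (s ε : ℝ) (N : ℕ) (Z : Set X1) : ℝ≥0∞ :=
  ⨅ (D : Set (ℕ × Set X1 × ℝ≥0∞)) (_ : D.Countable)
    (_ : ∀ p ∈ D, N ≤ p.1 ∧ MeasurableSet p.2.1 ∧ 0 < p.2.2 ∧ p.2.2 ≠ ⊤ ∧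
        ∃ x : X1, p.2.1 ⊆ wBowen T τ a p.1 x ε)
    (_ : ∀ z ∈ Z, 1 ≤ ∑' p : D, (p.1.2.1).indicator (fun _ => p.1.2.2) z),
    ∑' p : D, p.1.2.2 * pterm T1 f (a 0) s p.1.1 p.1.2.1

/-- `W^{𝐚,s}_{ε}(Z,f)`. -/
noncomputable def wBowenW (T1 : X1 → X1) (T : ∀ i, X i → X i) (τ : ∀ i, X1 → X i)
    (a : Fin k → ℝ) (f : X1 → ℝ) (s ε : ℝ) (Z : Set X1) : ℝ≥0∞ :=
  ⨆ N : ℕ, wBowenWN T1 T τ a f s ε N Z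

/-- `P_W^𝐚(T₁, Z, ε, f)`. -/
noncomputable def PWBowenEps (T1 : X1 → X1) (T : ∀ i, X i → X i) (τ : ∀ i, X1 → X i)
    (a : Fin k → ℝ) (Z : Set X1) (f : X1 → ℝ) (ε : ℝ) : EReal :=
  sInf (Real.toEReal '' {s : ℝ | wBowenW T1 T τ a f s ε Z = 0})

/-- the average 𝐚-weighted topological pressure `P_W^𝐚(T₁, Z, f)`. -/
noncomputable def PWBowen (T1 : X1 → X1) (T : ∀ i, X i → X i) (τ : ∀ i, X1 → X i)
    (a : Fin k → ℝ) (Z : Set X1) (f : X1 → ℝ) : EReal :=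
  ⨆ ε : {e : ℝ // 0 < e}, PWBowenEps T1 T τ a Z f ε.1

end Bowen

section Local

variable [NeZero k] {X1 : Type*} [MeasurableSpace X1]

/-- the cover `⋁_{i=1}^k (τ_{i-1}^{-1} 𝒰_i)_0^{⌈(a_1+…+a_i) n⌉ - 1}` on the first space, where
`𝒱 i` is the pulled back cover `τ_{i-1}^{-1} 𝒰_i`. -/
def jointFiber (T1 : X1 → X1) (a : Fin k → ℝ) (𝒱 : Fin k → Set (Set X1)) (n : ℕ) :
    Set (Set X1) :=
  {A | ∃ V : Fin k → ℕ → Set X1,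
      (∀ i, ∀ l < ⌈cw a i * (n : ℝ)⌉₊, V i l ∈ 𝒱 i) ∧
      A = ⋂ i : Fin k, ⋂ l ∈ Finset.range ⌈cw a i * (n : ℝ)⌉₊, (T1^[l]) ⁻¹' V i l}

/-- `Λ^{𝐚,s}_{N,{𝒰_i}}(Z,f)`. -/
noncomputable def lamLocN (T1 : X1 → X1) (a : Fin k → ℝ) (𝒱 : Fin k → Set (Set X1))
    (f : X1 → ℝ) (s : ℝ) (N : ℕ) (Z : Set X1) : ℝ≥0∞ :=
  ⨅ (D : Set (ℕ × Set X1)) (_ : D.Countable)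
    (_ : ∀ p ∈ D, N ≤ p.1 ∧ MeasurableSet p.2 ∧ ∃ A ∈ jointFiber T1 a 𝒱 p.1, p.2 ⊆ A)
    (_ : Z ⊆ ⋃ p ∈ D, p.2),
    ∑' p : D, pterm T1 f (a 0) s p.1.1 p.1.2

/-- `Λ^{𝐚,s}_{{𝒰_i}}(Z,f)`. -/
noncomputable def lamLoc (T1 : X1 → X1) (a : Fin k → ℝ) (𝒱 : Fin k → Set (Set X1))
    (f : X1 → ℝ) (s : ℝ) (Z : Set X1) : ℝ≥0∞ :=
  ⨆ N : ℕ, lamLocN T1 a 𝒱 f s N Z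

/-- the local 𝐚-weighted topological pressure `P^𝐚(T₁, Z, {𝒰_i}, f)`, expressed through the
pulled-back covers `𝒱 i = τ_{i-1}^{-1} 𝒰_i`. -/
noncomputable def PLoc (T1 : X1 → X1) (a : Fin k → ℝ) (𝒱 : Fin k → Set (Set X1))
    (Z : Set X1) (f : X1 → ℝ) : EReal :=
  sInf (Real.toEReal '' {s : ℝ | lamLoc T1 a 𝒱 f s Z = 0})

/-- `W^{𝐚,s}_{N,{𝒰_i}}(Z,f)`. -/
noncomputable def wLocN (T1 : X1 → X1) (a : Fin k → ℝ) (𝒱 : Fin k → Set (Set X1))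
    (f : X1 → ℝ) (s : ℝ) (N : ℕ) (Z : Set X1) : ℝ≥0∞ :=
  ⨅ (D : Set (ℕ × Set X1 × ℝ≥0∞)) (_ : D.Countable)
    (_ : ∀ p ∈ D, N ≤ p.1 ∧ MeasurableSet p.2.1 ∧ 0 < p.2.2 ∧ p.2.2 ≠ ⊤ ∧
        ∃ A ∈ jointFiber T1 a 𝒱 p.1, p.2.1 ⊆ A)
    (_ : ∀ z ∈ Z, 1 ≤ ∑' p : D, (p.1.2.1).indicator (fun _ => p.1.2.2) z),
    ∑' p : D, p.1.2.2 * pterm T1 f (a 0) s p.1.1 p.1.2.1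

/-- `W^{𝐚,s}_{{𝒰_i}}(Z,f)`. -/
noncomputable def wLoc (T1 : X1 → X1) (a : Fin k → ℝ) (𝒱 : Fin k → Set (Set X1))
    (f : X1 → ℝ) (s : ℝ) (Z : Set X1) : ℝ≥0∞ :=
  ⨆ N : ℕ, wLocN T1 a 𝒱 f s N Z

/-- the local average 𝐚-weighted topological pressure `P_W^𝐚(T₁, Z, {𝒰_i}, f)`. -/
noncomputable def PWLoc (T1 : X1 → X1) (a : Fin k → ℝ) (𝒱 : Fin k → Set (Set X1))
    (Z : Set X1) (f : X1 → ℝ) : EReal :=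
  sInf (Real.toEReal '' {s : ℝ | wLoc T1 a 𝒱 f s Z = 0})

end Local

/-- iterated join `(𝒰)_0^{n-1} = ⋁_{l=0}^{n-1} T^{-l} 𝒰` of a cover. -/
def covJoinT {X : Type*} (T : X → X) (𝒰 : Set (Set X)) (n : ℕ) : Set (Set X) :=
  {A | ∃ u : ℕ → Set X, (∀ l < n, u l ∈ 𝒰) ∧
      A = ⋂ l ∈ Finset.range n, (T^[l]) ⁻¹' u l}

/-- the join `⋁_{j=i}^{k} 𝒱 j` of covers of a single space (in applications
`𝒱 j = τ_{j-1}^{-1} 𝒰_j`). -/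
def joinFrom {X1 : Type*} (𝒱 : Fin k → Set (Set X1)) (i : Fin k) : Set (Set X1) :=
  {A | ∃ V : Fin k → Set X1, (∀ j, i ≤ j → V j ∈ 𝒱 j) ∧ A = ⋂ j ∈ Finset.Ici i, V j}

/-- a finite measurable partition (indexed). -/
def IsPart {X : Type*} [MeasurableSpace X] {ι : Type*} (β : ι → Set X) : Prop :=
  (∀ i, MeasurableSet (β i)) ∧ (∀ i j, i ≠ j → Disjoint (β i) (β j)) ∧ ⋃ i, β i = Set.univ

/-- the static entropy `H_μ(β) = -∑ μ(B) log μ(B)` of a finite (indexed) partition. -/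
noncomputable def entH {X : Type*} [MeasurableSpace X] {ι : Type*} [Fintype ι]
    (μ : Measure X) (β : ι → Set X) : ℝ :=
  ∑ i, Real.negMulLog (μ (β i)).toReal

/-- the dynamical join `⋁_{l=0}^{n-1} T^{-l} β` of a partition. -/
def dynJoin {X : Type*} (T : X → X) {ι : Type*} (β : ι → Set X) (n : ℕ) :
    (Fin n → ι) → Set X :=
  fun c => ⋂ l : Fin n, (T^[(l : ℕ)]) ⁻¹' β (c l)

/-- the measure-theoretic entropy `h_μ(T, β) = lim_n (1/n) H_μ(⋁_{l<n} T^{-l}β)` of `T`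
relative to a finite partition. -/
noncomputable def hPart {X : Type*} [MeasurableSpace X] {ι : Type*} [Fintype ι]
    (μ : Measure X) (T : X → X) (β : ι → Set X) : EReal :=
  Filter.liminf (fun n : ℕ => ((entH μ (dynJoin T β n) / n : ℝ) : EReal)) Filter.atTop

/-- the Kolmogorov–Sinai entropy `h_μ(T)`. -/
noncomputable def hKS {X : Type*} [MeasurableSpace X] (μ : Measure X) (T : X → X) : EReal :=
  ⨆ p : (Σ m : ℕ, {β : Fin m → Set X // IsPart β}), hPart μ T p.2.1

/-- `H_μ(𝒰) = inf {H_μ(β) : β a finite measurable partition refining 𝒰}`. -/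
noncomputable def covH {X : Type*} [MeasurableSpace X] (μ : Measure X)
    (𝒰 : Set (Set X)) : ℝ :=
  sInf {h : ℝ | ∃ (m : ℕ) (β : Fin m → Set X), IsPart β ∧
      (∀ i, ∃ U ∈ 𝒰, β i ⊆ U) ∧ h = entH μ β}

/-- the local measure-theoretic entropy `h_μ(T, 𝒰) = lim_n (1/n) H_μ((𝒰)_0^{n-1})` of `T`
relative to an open cover. -/
noncomputable def hCov {X : Type*} [MeasurableSpace X] (μ : Measure X) (T : X → X)
    (𝒰 : Set (Set X)) : EReal :=
  Filter.liminf (fun n : ℕ => ((covH μ (covJoinT T 𝒰 n) / n : ℝ) : EReal)) Filter.atTop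

/-- `h⁺_μ(T,𝒰) = inf {h_μ(T,β) : β a finite measurable partition refining 𝒰}`. -/
noncomputable def hCovPlus {X : Type*} [MeasurableSpace X] (μ : Measure X) (T : X → X)
    (𝒰 : Set (Set X)) : EReal :=
  ⨅ p : (Σ m : ℕ, {β : Fin m → Set X // IsPart β ∧ ∀ i, ∃ U ∈ 𝒰, β i ⊆ U}),
    hPart μ T p.2.1

/-- the join `⋁_{j=i}^{k} γ j` of partitions of a single space (in applications
`γ j = τ_{j-1}^{-1} α_j`). -/
def partJoinFrom {X1 : Type*} {ι : Fin k → Type*} (γ : ∀ j, ι j → Set X1) (i : Fin k) :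
    (∀ j : {j : Fin k // i ≤ j}, ι j) → Set X1 :=
  fun c => ⋂ j : {j : Fin k // i ≤ j}, γ j (c j)

/-- the partition `⋁_{i=1}^k (γ_i)_0^{⌈(a_1+…+a_i)N⌉-1}` on the first space, where
`γ i = τ_{i-1}^{-1} α_i`. -/
def bigPartJoin {X1 : Type*} (T1 : X1 → X1) (a : Fin k → ℝ) {ι : Fin k → Type*}
    (γ : ∀ i, ι i → Set X1) (N : ℕ) :
    (∀ i : Fin k, Fin ⌈cw a i * (N : ℝ)⌉₊ → ι i) → Set X1 :=
  fun c => ⋂ i : Fin k, ⋂ l : Fin ⌈cw a i * (N : ℝ)⌉₊, (T1^[(l : ℕ)]) ⁻¹' γ i (c i l)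

/-- conditional entropy `H_μ(γ|β) = H_μ(γ ∨ β) - H_μ(β)`. -/
noncomputable def condEnt {X : Type*} [MeasurableSpace X] {ι κ : Type*} [Fintype ι] [Fintype κ]
    (μ : Measure X) (γ : ι → Set X) (β : κ → Set X) : ℝ :=
  entH μ (fun p : ι × κ => γ p.1 ∩ β p.2) - entH μ β

/-- the oscillation `w_f(⋁_{i=1}^k τ_{i-1}^{-1} 𝒰_i)` of `f` on the joined cover, where
`𝒱 i = τ_{i-1}^{-1} 𝒰_i`. -/
noncomputable def wfJoin {X1 : Type*} (f : X1 → ℝ) (𝒱 : Fin k → Set (Set X1)) : ℝ :=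
  sSup {d : ℝ | ∃ V : Fin k → Set X1, (∀ i, V i ∈ 𝒱 i) ∧
      ∃ x ∈ ⋂ i, V i, ∃ y ∈ ⋂ i, V i, d = |f x - f y|}

/-- the topological support of a measure. -/
def msupp {X : Type*} [TopologicalSpace X] [MeasurableSpace X] (μ : Measure X) : Set X :=
  {x | ∀ U : Set X, IsOpen U → x ∈ U → 0 < μ U}

-- === auxiliary lemmas ===

private lemma iInf4_le {α ι : Type*} [CompleteLattice α] {P Q R : ι → Prop}
    {g : ι → α} (D : ι) (h1 : P D) (h2 : Q D) (h3 : R D) :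
    ⨅ (d : ι) (_ : P d) (_ : Q d) (_ : R d), g d ≤ g D :=
  (iInf_le _ D).trans ((iInf_le _ h1).trans ((iInf_le _ h2).trans (iInf_le _ h3)))

lemma iter_comm {X1 X2 : Type*} {τ : X1 → X2} {T1 : X1 → X1} {T2 : X2 → X2}
    (h : τ ∘ T1 = T2 ∘ τ) (l : ℕ) (y : X1) : τ (T1^[l] y) = T2^[l] (τ y) := by
  induction l with
  | zero => simp
  | succ n ih =>
      rw [Function.iterate_succ_apply', Function.iterate_succ_apply', ← ih]
      exact congrFun h _

section Core

variable [NeZero k] {X : Fin k → Type} [∀ i, MetricSpace (X i)] [MeasurableSpace (X 0)]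

lemma lamBowenN_le_lamLocN
    (T : ∀ i, X i → X i) (τ : ∀ i, X 0 → X i) (hτe : ∀ i, τ i ∘ T 0 = T i ∘ τ i)
    (𝒰 : ∀ i, Set (Set (X i))) {ε : ℝ}
    (hdiam : ∀ i, ∀ U ∈ 𝒰 i, ∀ x ∈ U, ∀ y ∈ U, dist x y < ε)
    (a : Fin k → ℝ) (f : X 0 → ℝ) (s : ℝ) (N : ℕ) (Z : Set (X 0)) :
    lamBowenN (T 0) T τ a f s ε N Z
      ≤ lamLocN (T 0) a (fun i => pullCov (τ i) (𝒰 i)) f s N Z := by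
  refine le_iInf fun D => le_iInf fun hDc => le_iInf fun hD => le_iInf fun hcov => ?_
  set D' : Set (ℕ × Set (X 0)) := {p ∈ D | p.2.Nonempty} with hD'def
  have hsub : D' ⊆ D := fun p hp => hp.1
  have hcond : ∀ p ∈ D', N ≤ p.1 ∧ MeasurableSet p.2 ∧ ∃ x : X 0, p.2 ⊆ wBowen T τ a p.1 x ε :=
    ?_
  swap
  · rintro p ⟨hpD, x, hx⟩
    obtain ⟨hN, hmeas, A, hA, hAsub⟩ := hD p hpD
    refine ⟨hN, hmeas, x, ?_⟩
    intro y hy i j hj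
    obtain ⟨V, hV, hAeq⟩ := hA
    obtain ⟨U, hU, hVU⟩ := hV i j hj
    have hxA : x ∈ A := hAsub hx
    have hyA : y ∈ A := hAsub hy
    rw [hAeq] at hxA hyA
    have hxV : (T 0)^[j] x ∈ V i j :=
      Set.mem_iInter₂.1 (Set.mem_iInter.1 hxA i) j (Finset.mem_range.2 hj)
    have hyV : (T 0)^[j] y ∈ V i j :=
      Set.mem_iInter₂.1 (Set.mem_iInter.1 hyA i) j (Finset.mem_range.2 hj)
    rw [← hVU] at hxV hyV
    have hx' : (T i)^[j] (τ i x) ∈ U := by rw [← iter_comm (hτe i)]; exact hxV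
    have hy' : (T i)^[j] (τ i y) ∈ U := by rw [← iter_comm (hτe i)]; exact hyV
    exact hdiam i U hU _ hx' _ hy'
  have hcov' : Z ⊆ ⋃ p ∈ D', p.2 := by
    intro z hz
    obtain ⟨p, hpD, hzp⟩ := Set.mem_iUnion₂.1 (hcov hz)
    exact Set.mem_iUnion₂.2 ⟨p, ⟨hpD, z, hzp⟩, hzp⟩
  have hle : lamBowenN (T 0) T τ a f s ε N Z
      ≤ ∑' p : D', pterm (T 0) f (a 0) s p.1.1 p.1.2 := by
    unfold lamBowenN
    exact iInf4_le D' (hDc.mono hsub) hcond hcov'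
  refine hle.trans ?_
  have hmono := ENNReal.tsum_mono_subtype
    (fun q : ℕ × Set (X 0) => pterm (T 0) f (a 0) s q.1 q.2) hsub
  convert hmono using 2

lemma lamLocN_le_lamBowenN
    (T : ∀ i, X i → X i) (τ : ∀ i, X 0 → X i) (hτe : ∀ i, τ i ∘ T 0 = T i ∘ τ i)
    (𝒰 : ∀ i, Set (Set (X i))) {δ : ℝ}
    (hleb : ∀ i, ∀ y : X i, ∃ U ∈ 𝒰 i, Metric.ball y δ ⊆ U)
    (a : Fin k → ℝ) (f : X 0 → ℝ) (s : ℝ) (N : ℕ) (Z : Set (X 0)) :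
    lamLocN (T 0) a (fun i => pullCov (τ i) (𝒰 i)) f s N Z
      ≤ lamBowenN (T 0) T τ a f s δ N Z := by
  choose U hU hball using hleb
  refine le_iInf fun D => le_iInf fun hDc => le_iInf fun hD => le_iInf fun hcov => ?_
  refine iInf4_le D hDc ?_ hcov
  intro p hpD
  obtain ⟨hN, hmeas, x, hsub⟩ := hD p hpD
  refine ⟨hN, hmeas,
    ⋂ i : Fin k, ⋂ l ∈ Finset.range ⌈cw a i * (p.1 : ℝ)⌉₊,
      ((T 0)^[l]) ⁻¹' (τ i ⁻¹' U i ((T i)^[l] (τ i x))), ?_, ?_⟩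
  · exact ⟨fun i l => τ i ⁻¹' U i ((T i)^[l] (τ i x)),
      fun i l _ => ⟨U i ((T i)^[l] (τ i x)), hU i _, rfl⟩, rfl⟩
  · intro y hy
    refine Set.mem_iInter.2 fun i => Set.mem_iInter₂.2 fun l hl => ?_
    have hd := hsub hy i l (Finset.mem_range.1 hl)
    show (T 0)^[l] y ∈ τ i ⁻¹' U i ((T i)^[l] (τ i x))
    have : τ i ((T 0)^[l] y) ∈ Metric.ball ((T i)^[l] (τ i x)) δ := by
      rw [iter_comm (hτe i)]
      exact Metric.mem_ball'.2 hd
    exact hball i _ this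

end Core

lemma exists_lebesgue {Y : Type*} [MetricSpace Y] [CompactSpace Y] {𝒰 : Set (Set Y)}
    (h : IsOpenCover 𝒰) : ∃ δ > 0, ∀ y : Y, ∃ U ∈ 𝒰, Metric.ball y δ ⊆ U := by
  obtain ⟨δ, hδ, H⟩ := lebesgue_number_lemma_of_metric_sUnion isCompact_univ h.2.1 h.2.2.ge
  exact ⟨δ, hδ, fun y => H y (Set.mem_univ y)⟩

lemma exists_small_cover (Y : Type*) [MetricSpace Y] [CompactSpace Y] {ε : ℝ} (hε : 0 < ε) :
    ∃ 𝒰 : Set (Set Y), IsOpenCover 𝒰 ∧ ∀ U ∈ 𝒰, ∀ x ∈ U, ∀ y ∈ U, dist x y < ε := by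
  obtain ⟨t, ht⟩ := isCompact_univ.elim_finite_subcover (fun y : Y => Metric.ball y (ε / 3))
    (fun y => Metric.isOpen_ball)
    (fun x _ => Set.mem_iUnion.2 ⟨x, Metric.mem_ball_self (by linarith)⟩)
  refine ⟨(fun y => Metric.ball y (ε / 3)) '' (t : Set Y), ⟨t.finite_toSet.image _, ?_, ?_⟩, ?_⟩
  · rintro U ⟨y, -, rfl⟩; exact Metric.isOpen_ball
  · apply Set.eq_univ_of_univ_subset
    intro x hx
    obtain ⟨y, hy, hxW⟩ := Set.mem_iUnion₂.1 (ht hx)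
    exact ⟨Metric.ball y (ε / 3), ⟨y, hy, rfl⟩, hxW⟩
  · rintro U ⟨y, -, rfl⟩ x hx z hz
    have h1 := Metric.mem_ball.1 hx
    have h2 := Metric.mem_ball.1 hz
    calc dist x z ≤ dist x y + dist y z := dist_triangle x y z
      _ < ε / 3 + ε / 3 := by rw [dist_comm y z]; exact add_lt_add h1 h2
      _ < ε := by linarith

section Press

variable [NeZero k] {X : Fin k → Type} [∀ i, MetricSpace (X i)] [MeasurableSpace (X 0)]

lemma PBowenEps_le_PLoc
    (T : ∀ i, X i → X i) (τ : ∀ i, X 0 → X i) (hτe : ∀ i, τ i ∘ T 0 = T i ∘ τ i)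
    (𝒰 : ∀ i, Set (Set (X i))) {ε : ℝ}
    (hdiam : ∀ i, ∀ U ∈ 𝒰 i, ∀ x ∈ U, ∀ y ∈ U, dist x y < ε)
    (a : Fin k → ℝ) (Z : Set (X 0)) (f : X 0 → ℝ) :
    PBowenEps (T 0) T τ a Z f ε ≤ PLoc (T 0) a (fun i => pullCov (τ i) (𝒰 i)) Z f := by
  refine sInf_le_sInf (Set.image_mono ?_)
  intro s hs
  have h1 : lamBowen (T 0) T τ a f s ε Z
      ≤ lamLoc (T 0) a (fun i => pullCov (τ i) (𝒰 i)) f s Z :=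
    iSup_mono fun N => lamBowenN_le_lamLocN T τ hτe 𝒰 hdiam a f s N Z
  exact le_antisymm ((Set.mem_setOf_eq ▸ hs) ▸ h1) zero_le

lemma PLoc_le_PBowenEps
    (T : ∀ i, X i → X i) (τ : ∀ i, X 0 → X i) (hτe : ∀ i, τ i ∘ T 0 = T i ∘ τ i)
    (𝒰 : ∀ i, Set (Set (X i))) {δ : ℝ}
    (hleb : ∀ i, ∀ y : X i, ∃ U ∈ 𝒰 i, Metric.ball y δ ⊆ U)
    (a : Fin k → ℝ) (Z : Set (X 0)) (f : X 0 → ℝ) :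
    PLoc (T 0) a (fun i => pullCov (τ i) (𝒰 i)) Z f ≤ PBowenEps (T 0) T τ a Z f δ := by
  refine sInf_le_sInf (Set.image_mono ?_)
  intro s hs
  have h1 : lamLoc (T 0) a (fun i => pullCov (τ i) (𝒰 i)) f s Z
      ≤ lamBowen (T 0) T τ a f s δ Z :=
    iSup_mono fun N => lamLocN_le_lamBowenN T τ hτe 𝒰 hleb a f s N Z
  exact le_antisymm ((Set.mem_setOf_eq ▸ hs) ▸ h1) zero_le

end Press

/-- The 𝐚-weighted topological pressure of any subset `Z` equals both the
supremum over all tuples of open covers of the local 𝐚-weighted pressures, and the limit of the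
local 𝐚-weighted pressures as the maximal diameter of the covers tends to `0`. -/
theorem weighted_pressure_eq_sup_local_pressure
    {k : ℕ} [NeZero k]
    (X : Fin k → Type) [∀ i, MetricSpace (X i)] [∀ i, CompactSpace (X i)]
    [∀ i, MeasurableSpace (X i)] [∀ i, BorelSpace (X i)]
    (T : ∀ i, X i → X i) (hT : ∀ i, Continuous (T i))
    (τ : ∀ i, X 0 → X i) (hτ0 : τ 0 = id)
    (hτc : ∀ i, Continuous (τ i)) (hτs : ∀ i, Function.Surjective (τ i))
    (hτe : ∀ i, τ i ∘ T 0 = T i ∘ τ i)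
    (hchain : ∀ i j : Fin k, i ≤ j → ∃ p : X i → X j,
        Continuous p ∧ p ∘ T i = T j ∘ p ∧ p ∘ τ i = τ j)
    (a : Fin k → ℝ) (ha1 : 0 < a 0) (ha : ∀ i, 0 ≤ a i)
    (Z : Set (X 0)) (f : X 0 → ℝ) (hf : Continuous f) :
    (PBowen (T 0) T τ a Z f
        = ⨆ 𝒰 : {𝒰 : ∀ i, Set (Set (X i)) // ∀ i, IsOpenCover (𝒰 i)},
            PLoc (T 0) a (fun i => pullCov (τ i) (𝒰.1 i)) Z f)
    ∧ (∀ 𝒰s : ℕ → ∀ i, Set (Set (X i)),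
        (∀ n i, IsOpenCover (𝒰s n i)) →
        (∀ ε : ℝ, 0 < ε → ∃ N : ℕ, ∀ n ≥ N, ∀ i, ∀ U ∈ 𝒰s n i, Metric.diam U < ε) →
        Filter.Tendsto (fun n => PLoc (T 0) a (fun i => pullCov (τ i) (𝒰s n i)) Z f)
          Filter.atTop (nhds (PBowen (T 0) T τ a Z f))) := by
  have key_up : ∀ 𝒰 : ∀ i, Set (Set (X i)), (∀ i, IsOpenCover (𝒰 i)) →
      PLoc (T 0) a (fun i => pullCov (τ i) (𝒰 i)) Z f ≤ PBowen (T 0) T τ a Z f := by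
    intro 𝒰 h𝒰
    have hl : ∀ i, ∃ δ > 0, ∀ y : X i, ∃ U ∈ 𝒰 i, Metric.ball y δ ⊆ U :=
      fun i => exists_lebesgue (h𝒰 i)
    choose δ hδpos hδ using hl
    haveI : Nonempty (Fin k) := ⟨⟨0, Nat.pos_of_ne_zero (NeZero.ne k)⟩⟩
    set δ0 := Finset.univ.inf' Finset.univ_nonempty δ with hδ0def
    have hδ0pos : 0 < δ0 := (Finset.lt_inf'_iff _).2 fun i _ => hδpos i
    have hleb : ∀ i, ∀ y : X i, ∃ U ∈ 𝒰 i, Metric.ball y δ0 ⊆ U := by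
      intro i y
      obtain ⟨U, hU, hb⟩ := hδ i y
      exact ⟨U, hU,
        (Metric.ball_subset_ball (Finset.inf'_le _ (Finset.mem_univ i))).trans hb⟩
    refine (PLoc_le_PBowenEps T τ hτe 𝒰 hleb a Z f).trans ?_
    exact le_iSup (fun e : {e : ℝ // 0 < e} => PBowenEps (T 0) T τ a Z f e.1) ⟨δ0, hδ0pos⟩
  have key_dn : ∀ ε : ℝ, 0 < ε → ∀ 𝒰 : ∀ i, Set (Set (X i)),
      (∀ i, ∀ U ∈ 𝒰 i, ∀ x ∈ U, ∀ y ∈ U, dist x y < ε) →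
      PBowenEps (T 0) T τ a Z f ε ≤ PLoc (T 0) a (fun i => pullCov (τ i) (𝒰 i)) Z f :=
    fun ε _ 𝒰 h => PBowenEps_le_PLoc T τ hτe 𝒰 h a Z f
  constructor
  · apply le_antisymm
    · refine iSup_le fun e => ?_
      have h := fun i => exists_small_cover (X i) e.2
      choose 𝒰 hcov hdiam using h
      refine (key_dn e.1 e.2 𝒰 hdiam).trans ?_
      exact le_iSup (fun 𝒱 : {𝒰 : ∀ i, Set (Set (X i)) // ∀ i, IsOpenCover (𝒰 i)} =>
        PLoc (T 0) a (fun i => pullCov (τ i) (𝒱.1 i)) Z f) ⟨𝒰, hcov⟩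
    · exact iSup_le fun 𝒰 => key_up 𝒰.1 𝒰.2
  · intro 𝒰s hcovs hdiams
    rw [tendsto_order]
    constructor
    · intro b hb
      obtain ⟨e, hbe⟩ := lt_iSup_iff.1 hb
      obtain ⟨N, hN⟩ := hdiams e.1 e.2
      refine Filter.eventually_atTop.2 ⟨N, fun n hn => lt_of_lt_of_le hbe ?_⟩
      refine key_dn e.1 e.2 (𝒰s n) ?_
      intro i U hU x hx y hy
      calc dist x y ≤ Metric.diam U :=
            Metric.dist_le_diam_of_mem
              (isCompact_univ.isBounded.subset (Set.subset_univ U)) hx hy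
        _ < e.1 := hN n hn i U hU
    · intro b hb
      exact Filter.eventually_atTop.2
        ⟨0, fun n _ => lt_of_le_of_lt (key_up (𝒰s n) (hcovs n)) hb⟩


end WTP
end

section
/- Let M ∈ ℕ, Z ⊆ X_1, f ∈ C(X_1,ℝ), and let U_i be open covers of X_i for i=1,…,k. Then P^a(T_1, Z, {U_i}_{i=1}^k, f) = (1/M) · P^a(T_1^M, Z, {(U_i)_0^{M−1}}_{i=1}^k, S_M f), where on the right-hand side the local a-weighted pressure is computed for the tower of systems (X_i, T_i^M) with the same factor maps τ_i, with open covers (U_i)_0^{M−1}=⋁_{l=0}^{M−1}T_i^{−l}U_i, and with potential S_M f = Σ_{l=0}^{M−1} f∘T_1^l. -/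
open MeasureTheory Set Filter Topology
open scoped ENNReal symmDiff

namespace WTP

variable {k : ℕ}

section PowerAux

open Function
open scoped Pointwise

/-! ### Auxiliary lemmas for the power rule -/

theorem regroup {Y : Type*} (T : Y → Y) (W : ℕ → Set Y) (q M : ℕ) (hM : 0 < M) :
    (⋂ l ∈ Finset.range q, (T^[M])^[l] ⁻¹' (⋂ r ∈ Finset.range M, T^[r] ⁻¹' W (M*l + r)))
      = ⋂ j ∈ Finset.range (M*q), T^[j] ⁻¹' W j := by
  ext x
  simp only [Set.mem_iInter, Set.mem_preimage, Finset.mem_range]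
  constructor
  · intro h j hj
    have hq : j / M < q := Nat.div_lt_of_lt_mul hj
    have hr : j % M < M := Nat.mod_lt _ hM
    have := h (j / M) hq (j % M) hr
    rw [← Function.iterate_mul, ← Function.iterate_add_apply, Nat.mod_add_div,
      Nat.div_add_mod] at this
    exact this
  · intro h l hl r hr
    have hj : M * l + r < M * q := by
      calc M * l + r < M * l + M := by omega
      _ = M * (l+1) := by ring
      _ ≤ M * q := Nat.mul_le_mul_left _ (by omega)
    have := h (M*l+r) hj
    rw [← Function.iterate_mul, ← Function.iterate_add_apply, Nat.add_comm (M*l) r]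
    rwa [show M*l+r = r+M*l from by ring] at this

variable {X1 : Type*}

theorem birk_Ico (T : X1 → X1) (f : X1 → ℝ) {a b : ℕ} (h : a ≤ b) (x : X1) :
    birk T f b x = birk T f a x + ∑ l ∈ Finset.Ico a b, f (T^[l] x) := by
  rw [birk, birk, Finset.sum_range_add_sum_Ico _ h]

theorem abs_sum_Ico_le (T : X1 → X1) {f : X1 → ℝ} {F : ℝ} (hF : ∀ x, |f x| ≤ F)
    (a b : ℕ) (x : X1) :
    |∑ l ∈ Finset.Ico a b, f (T^[l] x)| ≤ ((b - a : ℕ) : ℝ) * F := by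
  calc |∑ l ∈ Finset.Ico a b, f (T^[l] x)| ≤ ∑ l ∈ Finset.Ico a b, |f (T^[l] x)| :=
        Finset.abs_sum_le_sum_abs _ _
    _ ≤ ∑ _l ∈ Finset.Ico a b, F := Finset.sum_le_sum fun i _ => hF _
    _ = ((b - a : ℕ) : ℝ) * F := by rw [Finset.sum_const, Nat.card_Ico, nsmul_eq_mul]

theorem abs_birk_le {T : X1 → X1} {f : X1 → ℝ} {F : ℝ} (hF : ∀ x, |f x| ≤ F)
    (m : ℕ) (x : X1) : |birk T f m x| ≤ (m : ℝ) * F := by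
  have h := abs_sum_Ico_le T hF 0 m x
  rw [Nat.sub_zero] at h
  rw [birk, Finset.range_eq_Ico]
  exact h

theorem birk_le_birk {T : X1 → X1} {f : X1 → ℝ} {F : ℝ} (hF : ∀ x, |f x| ≤ F)
    {m m' g : ℕ} (h1 : m' ≤ m + g) (h2 : m ≤ m' + g) (x : X1) :
    birk T f m' x ≤ birk T f m x + (g : ℝ) * F := by
  have hF0 : 0 ≤ F := (abs_nonneg _).trans (hF x)
  rcases le_total m' m with h | h
  · have he := birk_Ico T f h x
    have habs := abs_sum_Ico_le T hF m' m x
    have hc : ((m - m' : ℕ) : ℝ) ≤ (g : ℝ) := by exact_mod_cast (by omega : m - m' ≤ g)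
    have h6 := abs_le.1 habs
    nlinarith [h6.1, h6.2]
  · have he := birk_Ico T f h x
    have habs := abs_sum_Ico_le T hF m m' x
    have hc : ((m' - m : ℕ) : ℝ) ≤ (g : ℝ) := by exact_mod_cast (by omega : m' - m ≤ g)
    have h6 := abs_le.1 habs
    nlinarith [h6.1, h6.2]

theorem birk_pow (T : X1 → X1) (f : X1 → ℝ) (M q : ℕ) (x : X1) :
    birk (T^[M]) (birk T f M) q x = birk T f (M * q) x := by
  induction q generalizing x with
  | zero => simp [birk]
  | succ q ih =>
    rw [birk, Finset.sum_range_succ, ← birk]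
    rw [ih x]
    have h1 : M * q ≤ M * (q + 1) := Nat.mul_le_mul_left _ (Nat.le_succ _)
    rw [birk_Ico T f h1 x]
    congr 1
    rw [Finset.sum_Ico_eq_sum_range]
    have h2 : M * (q+1) - M * q = M := by
      have : M * (q+1) = M * q + M := by ring
      omega
    rw [h2, birk]
    refine Finset.sum_congr rfl fun l _ => ?_
    rw [← Function.iterate_mul, ← Function.iterate_add_apply, Nat.add_comm (M*q) l]

theorem sSup_birk_le {T : X1 → X1} {f : X1 → ℝ} {F : ℝ} (hF : ∀ x, |f x| ≤ F)
    {A A' : Set X1} (hsub : A' ⊆ A) (hne : A'.Nonempty) {m m' g : ℕ}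
    (h1 : m' ≤ m + g) (h2 : m ≤ m' + g) :
    sSup (birk T f m' '' A') ≤ sSup (birk T f m '' A) + (g : ℝ) * F := by
  have hbdd : BddAbove (birk T f m '' A) := by
    refine ⟨(m : ℝ) * F, ?_⟩
    rintro y ⟨x, hx, rfl⟩
    exact (abs_le.1 (abs_birk_le hF m x)).2
  refine csSup_le (hne.image _) ?_
  rintro y ⟨x, hx, rfl⟩
  exact (birk_le_birk hF h1 h2 x).trans
    (add_le_add_left (le_csSup hbdd ⟨x, hsub hx, rfl⟩) _)

/-! ceiling arithmetic -/

theorem ceil_mul_nat_le {c : ℝ} (hc : 0 ≤ c) (M n : ℕ) :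
    ⌈c * ((M * n : ℕ) : ℝ)⌉₊ ≤ M * ⌈c * (n : ℝ)⌉₊ := by
  rw [Nat.ceil_le]
  push_cast
  calc c * ((M : ℝ) * n) = (M : ℝ) * (c * n) := by ring
  _ ≤ (M : ℝ) * ⌈c * (n : ℝ)⌉₊ :=
      mul_le_mul_of_nonneg_left (Nat.le_ceil _) (by positivity)

theorem mul_ceil_le_ceil_add {c : ℝ} (hc : 0 ≤ c) (M n : ℕ) :
    M * ⌈c * (n : ℝ)⌉₊ ≤ ⌈c * ((M * n : ℕ) : ℝ)⌉₊ + M := by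
  rcases Nat.eq_zero_or_pos M with rfl | hM
  · simp
  set K := ⌈c * ((M * n : ℕ) : ℝ)⌉₊ with hK
  have h1 : (⌈c * (n : ℝ)⌉₊ : ℝ) < c * n + 1 := Nat.ceil_lt_add_one (by positivity)
  have h2 : c * ((M * n : ℕ) : ℝ) ≤ (K : ℝ) := Nat.le_ceil _
  have h5 : (0:ℝ) < M := by exact_mod_cast hM
  have e3 : ((M * n : ℕ) : ℝ) = (M : ℝ) * (n : ℝ) := by push_cast; ring
  rw [e3] at h2
  have key : ((M * ⌈c * (n : ℝ)⌉₊ : ℕ) : ℝ) < ((K + M : ℕ) : ℝ) := by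
    push_cast
    nlinarith [mul_lt_mul_of_pos_left h1 h5, h2]
  exact_mod_cast key.le

theorem div_succ_bounds {M m : ℕ} (hM : 0 < M) : m ≤ M * (m / M + 1) ∧ M * (m / M + 1) ≤ m + M := by
  have h := Nat.div_add_mod m M
  have h2 := Nat.mod_lt m hM
  have h3 : M * (m/M+1) = M*(m/M)+M := by ring
  omega

theorem ceil_le_mul_ceil {c : ℝ} (hc : 0 ≤ c) {M m n : ℕ} (hmn : m ≤ M * n) :
    ⌈c * (m : ℝ)⌉₊ ≤ M * ⌈c * (n : ℝ)⌉₊ := by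
  rw [Nat.ceil_le]
  have h4 : (m:ℝ) ≤ (M:ℝ)*(n:ℝ) := by exact_mod_cast hmn
  have h6 : (0:ℝ) ≤ (M:ℝ) := by positivity
  calc c * m ≤ c * ((M:ℝ)*(n:ℝ)) := mul_le_mul_of_nonneg_left h4 hc
  _ = (M:ℝ) * (c * (n:ℝ)) := by ring
  _ ≤ (M:ℝ) * (⌈c * ((n:ℕ) : ℝ)⌉₊ : ℝ) := mul_le_mul_of_nonneg_left (Nat.le_ceil _) h6
  _ = ((M * ⌈c * ((n:ℕ):ℝ)⌉₊ : ℕ) : ℝ) := by push_cast; ring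

theorem gap_bound {c : ℝ} (hc : 0 ≤ c) {M m n : ℕ} (hM : 0 < M) (hMn : M * n ≤ m + M) :
    M * ⌈c * (n : ℝ)⌉₊ ≤ ⌈c * (m : ℝ)⌉₊ + ⌈(c + 1) * (M : ℝ)⌉₊ := by
  have h1 : (⌈c * ((n:ℕ) : ℝ)⌉₊ : ℝ) < c * (n:ℝ) + 1 := Nat.ceil_lt_add_one (by positivity)
  have h2 : c * (m : ℝ) ≤ (⌈c * (m : ℝ)⌉₊ : ℝ) := Nat.le_ceil _
  have h3 : (c + 1) * (M : ℝ) ≤ (⌈(c + 1) * (M : ℝ)⌉₊ : ℝ) := Nat.le_ceil _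
  have h4 : (M:ℝ) * (n:ℝ) ≤ (m : ℝ) + M := by exact_mod_cast hMn
  have h5 : (0 : ℝ) < M := by exact_mod_cast hM
  have key : ((M * ⌈c * ((n:ℕ) : ℝ)⌉₊ : ℕ) : ℝ)
      < ((⌈c * (m:ℝ)⌉₊ + ⌈(c+1)*(M:ℝ)⌉₊ : ℕ) : ℝ) := by
    rw [Nat.cast_mul, Nat.cast_add]
    nlinarith [mul_lt_mul_of_pos_left h1 h5, mul_le_mul_of_nonneg_left h4 hc]
  exact_mod_cast key.le

/-! pterm comparisons -/

theorem pterm_d1 {T : X1 → X1} {f : X1 → ℝ} {F a1 : ℝ} (hF : ∀ x, |f x| ≤ F)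
    (hF0 : 0 ≤ F) (ha1 : 0 < a1) (s : ℝ) (M n : ℕ) (A : Set X1) :
    pterm T f a1 s (M * n) A
      ≤ ENNReal.ofReal (Real.exp ((M : ℝ) * F / a1))
          * pterm (T^[M]) (birk T f M) a1 ((M : ℝ) * s) n A := by
  rw [pterm, pterm, ← ENNReal.ofReal_mul (Real.exp_nonneg _), ← Real.exp_add]
  refine ENNReal.ofReal_le_ofReal (Real.exp_le_exp.2 ?_)
  have hbb : birk (T^[M]) (birk T f M) ⌈a1 * (n:ℝ)⌉₊ = birk T f (M * ⌈a1*(n:ℝ)⌉₊) :=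
    funext fun x => birk_pow T f M _ x
  rw [hbb]
  have hlin : -(s*((M*n:ℕ):ℝ)) = -((M:ℝ)*s*(n:ℝ)) := by push_cast; ring
  have hpos : (0:ℝ) ≤ 1/a1 := le_of_lt (one_div_pos.2 ha1)
  rcases A.eq_empty_or_nonempty with rfl | hA
  · simp only [Set.image_empty, Real.sSup_empty, mul_zero]
    rw [hlin]
    have : (0:ℝ) ≤ (M:ℝ)*F/a1 := by positivity
    linarith
  · have hc1 : ⌈a1 * ((M*n : ℕ):ℝ)⌉₊ ≤ M * ⌈a1*(n:ℝ)⌉₊ + M :=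
      le_trans (ceil_mul_nat_le ha1.le M n) (Nat.le_add_right _ _)
    have hc2 : M * ⌈a1*(n:ℝ)⌉₊ ≤ ⌈a1 * ((M*n : ℕ):ℝ)⌉₊ + M := mul_ceil_le_ceil_add ha1.le M n
    have hsup := sSup_birk_le (T := T) hF (le_refl A) hA hc1 hc2
    have hmul := mul_le_mul_of_nonneg_left hsup hpos
    rw [mul_add] at hmul
    have he : (1/a1) * (((M:ℕ):ℝ) * F) = (M:ℝ)*F/a1 := by push_cast; ring
    rw [hlin]
    rw [he] at hmul
    linarith

theorem pterm_d2 {T : X1 → X1} {f : X1 → ℝ} {F a1 : ℝ} (hF : ∀ x, |f x| ≤ F)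
    (hF0 : 0 ≤ F) (ha1 : 0 < a1) (s : ℝ) {M m n : ℕ} (hM : 0 < M)
    (h1 : m ≤ M * n) (h2 : M * n ≤ m + M) {A'' A : Set X1} (hsub : A'' ⊆ A)
    (hne : A''.Nonempty) :
    pterm (T^[M]) (birk T f M) a1 ((M : ℝ) * s) n A''
      ≤ ENNReal.ofReal (Real.exp (|s| * M + (⌈(a1+1)*(M:ℝ)⌉₊ : ℝ) * F / a1))
          * pterm T f a1 s m A := by
  rw [pterm, pterm, ← ENNReal.ofReal_mul (Real.exp_nonneg _), ← Real.exp_add]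
  refine ENNReal.ofReal_le_ofReal (Real.exp_le_exp.2 ?_)
  have hbb : birk (T^[M]) (birk T f M) ⌈a1 * (n:ℝ)⌉₊ = birk T f (M * ⌈a1*(n:ℝ)⌉₊) :=
    funext fun x => birk_pow T f M _ x
  rw [hbb]
  have hpos : (0:ℝ) ≤ 1/a1 := le_of_lt (one_div_pos.2 ha1)
  have hceil1 : ⌈a1*(m:ℝ)⌉₊ ≤ M*⌈a1*(n:ℝ)⌉₊ := ceil_le_mul_ceil ha1.le h1
  have hceil2 : M*⌈a1*(n:ℝ)⌉₊ ≤ ⌈a1*(m:ℝ)⌉₊ + ⌈(a1+1)*(M:ℝ)⌉₊ := gap_bound ha1.le hM h2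
  have hsup := sSup_birk_le (T := T) hF hsub hne hceil2
    (le_trans hceil1 (Nat.le_add_right _ _))
  have hmul := mul_le_mul_of_nonneg_left hsup hpos
  rw [mul_add] at hmul
  have he : (1/a1) * ((⌈(a1+1)*(M:ℝ)⌉₊:ℝ) * F) = (⌈(a1+1)*(M:ℝ)⌉₊:ℝ)*F/a1 := by ring
  rw [he] at hmul
  -- linear part
  have habs : |(m:ℝ) - (M:ℝ)*n| ≤ (M:ℝ) := by
    have c1 : (m:ℝ) ≤ (M:ℝ)*n := by exact_mod_cast h1
    have c2 : (M:ℝ)*n ≤ (m:ℝ) + M := by exact_mod_cast h2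
    rw [abs_le]
    constructor <;> linarith
  have hlin : -(((M:ℝ)*s) * (n:ℝ)) ≤ -(s*(m:ℝ)) + |s| * M := by
    have e1 : s*(m:ℝ) - (M:ℝ)*s*(n:ℝ) = s * ((m:ℝ) - (M:ℝ)*n) := by ring
    have e2 : s * ((m:ℝ) - (M:ℝ)*n) ≤ |s| * M := by
      calc s * ((m:ℝ) - (M:ℝ)*n) ≤ |s * ((m:ℝ) - (M:ℝ)*n)| := le_abs_self _
      _ = |s| * |(m:ℝ) - (M:ℝ)*n| := abs_mul _ _
      _ ≤ |s| * M := mul_le_mul_of_nonneg_left habs (abs_nonneg _)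
    linarith
  linarith

/-! joint fiber comparisons -/

theorem jointFiber_d1 {T1 : X1 → X1} {a : Fin k → ℝ} (hc : ∀ i, 0 ≤ cw a i)
    {𝒱 : Fin k → Set (Set X1)} {M n : ℕ} (hM : 0 < M) {B : Set X1}
    (hB : B ∈ jointFiber (T1^[M]) a (fun i => covJoinT T1 (𝒱 i) M) n) :
    ∃ B' ∈ jointFiber T1 a 𝒱 (M * n), B ⊆ B' := by
  classical
  obtain ⟨V, hV, rfl⟩ := hB
  simp only [covJoinT, Set.mem_setOf_eq] at hV
  choose u hu1 hu2 using hV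
  set W : Fin k → ℕ → Set X1 := fun i j =>
    if h : j / M < ⌈cw a i * (n:ℝ)⌉₊ then u i (j/M) h (j % M) else Set.univ with hW
  refine ⟨⋂ i, ⋂ j ∈ Finset.range ⌈cw a i * ((M*n : ℕ):ℝ)⌉₊, T1^[j] ⁻¹' W i j,
    ⟨W, fun i j hj => ?_, rfl⟩, fun x hx => ?_⟩
  · have hj' : j < M * ⌈cw a i * (n:ℝ)⌉₊ := lt_of_lt_of_le hj (ceil_mul_nat_le (hc i) M n)
    have hq : j / M < ⌈cw a i * (n:ℝ)⌉₊ := Nat.div_lt_of_lt_mul hj'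
    simp only [hW, dif_pos hq]
    exact hu1 i (j/M) hq (j % M) (Nat.mod_lt _ hM)
  · simp only [Set.mem_iInter, Set.mem_preimage, Finset.mem_range] at hx ⊢
    intro i j hj
    have hj' : j < M * ⌈cw a i * (n:ℝ)⌉₊ := lt_of_lt_of_le hj (ceil_mul_nat_le (hc i) M n)
    have hq : j / M < ⌈cw a i * (n:ℝ)⌉₊ := Nat.div_lt_of_lt_mul hj'
    have hxl := hx i (j/M) hq
    rw [hu2 i (j/M) hq] at hxl
    simp only [Set.mem_iInter, Set.mem_preimage, Finset.mem_range] at hxl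
    have hr := hxl (j % M) (Nat.mod_lt _ hM)
    rw [← Function.iterate_mul, ← Function.iterate_add_apply, Nat.mod_add_div] at hr
    simp only [hW, dif_pos hq]
    exact hr

theorem jointFiber_d2 [MeasurableSpace X1] {T1 : X1 → X1} (hT1 : Measurable T1)
    {a : Fin k → ℝ} (hc : ∀ i, 0 ≤ cw a i) {𝒱 : Fin k → Set (Set X1)}
    (hVmeas : ∀ i, ∀ V ∈ 𝒱 i, MeasurableSet V) (hVcov : ∀ i, ⋃₀ 𝒱 i = Set.univ)
    {M m : ℕ} (hM : 0 < M) {A B : Set X1} (hAB : A ⊆ B) (hB : B ∈ jointFiber T1 a 𝒱 m) :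
    ∃ C : (∀ i : Fin k, Fin (⌈(cw a i + 1)*(M:ℝ)⌉₊) → ↥(𝒱 i)) → Set X1,
      (∀ t, (C t) ∈ jointFiber (T1^[M]) a (fun i => covJoinT T1 (𝒱 i) M) (m / M + 1)
          ∧ MeasurableSet (C t))
      ∧ A ⊆ ⋃ t, C t := by
  classical
  obtain ⟨V, hV, rfl⟩ := hB
  set n := m / M + 1 with hn
  set Wt : (∀ i : Fin k, Fin (⌈(cw a i + 1)*(M:ℝ)⌉₊) → ↥(𝒱 i)) → Fin k → ℕ → Set X1 :=
    fun t i j =>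
      if h1 : j < ⌈cw a i * (m:ℝ)⌉₊ then V i j
      else if h2 : j - ⌈cw a i * (m:ℝ)⌉₊ < ⌈(cw a i + 1)*(M:ℝ)⌉₊ then
        ((t i ⟨j - ⌈cw a i * (m:ℝ)⌉₊, h2⟩ : ↥(𝒱 i)) : Set X1)
      else Set.univ with hWt
  have hWtmem : ∀ t i j, j < M * ⌈cw a i * (n:ℝ)⌉₊ → Wt t i j ∈ 𝒱 i := by
    intro t i j hj
    have hgap : M * ⌈cw a i * (n:ℝ)⌉₊ ≤ ⌈cw a i * (m:ℝ)⌉₊ + ⌈(cw a i + 1)*(M:ℝ)⌉₊ :=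
      gap_bound (hc i) hM (div_succ_bounds hM).2
    simp only [hWt]
    split_ifs with h1 h2
    · exact hV i j h1
    · exact (t i ⟨j - ⌈cw a i * (m:ℝ)⌉₊, h2⟩).2
    · omega
  refine ⟨fun t => ⋂ i, ⋂ j ∈ Finset.range (M * ⌈cw a i * ((n:ℕ):ℝ)⌉₊), T1^[j] ⁻¹' Wt t i j,
    fun t => ⟨?_, ?_⟩, ?_⟩
  · refine ⟨fun i l => ⋂ r ∈ Finset.range M, T1^[r] ⁻¹' Wt t i (M*l + r),
      fun i l hl => ?_, ?_⟩
    · refine ⟨fun r => Wt t i (M*l+r), fun r hr => ?_, rfl⟩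
      refine hWtmem t i _ ?_
      calc M * l + r < M * l + M := by omega
      _ = M * (l+1) := by ring
      _ ≤ M * ⌈cw a i * ((n:ℕ):ℝ)⌉₊ := Nat.mul_le_mul_left _ (by omega)
    · exact (Set.iInter_congr fun i => (regroup T1 (Wt t i) _ M hM)).symm
  · refine MeasurableSet.iInter fun i => MeasurableSet.iInter fun j =>
      MeasurableSet.iInter fun hj => MeasurableSet.preimage ?_ (hT1.iterate j)
    simp only [hWt]
    split_ifs with h1 h2
    · exact hVmeas i _ (hV i j h1)
    · exact hVmeas i _ (t i ⟨j - ⌈cw a i * (m:ℝ)⌉₊, h2⟩).2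
    · exact MeasurableSet.univ
  · intro x hx
    have hch : ∀ i (d : Fin (⌈(cw a i + 1)*(M:ℝ)⌉₊)),
        ∃ S ∈ 𝒱 i, T1^[⌈cw a i * (m:ℝ)⌉₊ + (d:ℕ)] x ∈ S := by
      intro i d
      have hmem : T1^[⌈cw a i * (m:ℝ)⌉₊ + (d:ℕ)] x ∈ ⋃₀ 𝒱 i := by
        rw [hVcov i]; trivial
      exact hmem
    choose S hS1 hS2 using hch
    refine Set.mem_iUnion.2 ⟨fun i d => ⟨S i d, hS1 i d⟩, ?_⟩
    simp only [Set.mem_iInter, Set.mem_preimage, Finset.mem_range]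
    intro i j hj
    have hxB := hAB hx
    simp only [Set.mem_iInter, Set.mem_preimage, Finset.mem_range] at hxB
    simp only [hWt]
    split_ifs with h1 h2
    · exact hxB i j h1
    · have hj2 : ⌈cw a i * (m:ℝ)⌉₊ + (j - ⌈cw a i * (m:ℝ)⌉₊) = j := by omega
      have hgoal := hS2 i ⟨j - ⌈cw a i * (m:ℝ)⌉₊, h2⟩
      simpa [hj2] using hgoal
    · trivial

/-! lamLocN comparisons -/

theorem le_mul_lamLocN [NeZero k] [MeasurableSpace X1] {C x : ℝ≥0∞} (hC0 : C ≠ 0)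
    (hCt : C ≠ ⊤) (T' : X1 → X1) (a : Fin k → ℝ) (𝒱 : Fin k → Set (Set X1)) (f : X1 → ℝ)
    (s : ℝ) (N : ℕ) (Z : Set X1)
    (h : ∀ D : Set (ℕ × Set X1), D.Countable →
      (∀ p ∈ D, N ≤ p.1 ∧ MeasurableSet p.2 ∧ ∃ A ∈ jointFiber T' a 𝒱 p.1, p.2 ⊆ A) →
      (Z ⊆ ⋃ p ∈ D, p.2) → x ≤ C * ∑' p : D, pterm T' f (a 0) s p.1.1 p.1.2) :
    x ≤ C * lamLocN T' a 𝒱 f s N Z := by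
  rw [lamLocN, mul_comm, ← ENNReal.div_le_iff_le_mul (Or.inl hC0) (Or.inl hCt)]
  refine le_iInf fun D => le_iInf fun hDc => le_iInf fun hDv => le_iInf fun hDZ => ?_
  rw [ENNReal.div_le_iff_le_mul (Or.inl hC0) (Or.inl hCt), mul_comm]
  exact h D hDc hDv hDZ

theorem lamLocN_d1 [NeZero k] [MeasurableSpace X1] {T1 : X1 → X1} {a : Fin k → ℝ}
    (ha1 : 0 < a 0) (hc : ∀ i, 0 ≤ cw a i) (𝒱 : Fin k → Set (Set X1))
    {f : X1 → ℝ} {F : ℝ} (hF : ∀ x, |f x| ≤ F) (hF0 : 0 ≤ F) {M : ℕ} (hM : 0 < M)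
    (s : ℝ) (N : ℕ) (Z : Set X1) :
    lamLocN T1 a 𝒱 f s N Z
      ≤ ENNReal.ofReal (Real.exp ((M:ℝ) * F / (a 0))) *
        lamLocN (T1^[M]) a (fun i => covJoinT T1 (𝒱 i) M) (birk T1 f M) ((M:ℝ)*s) N Z := by
  set C := ENNReal.ofReal (Real.exp ((M:ℝ) * F / (a 0))) with hC
  have hC0 : C ≠ 0 := by
    simp only [hC, ne_eq, ENNReal.ofReal_eq_zero, not_le]
    exact Real.exp_pos _
  have hCt : C ≠ ⊤ := ENNReal.ofReal_ne_top
  refine le_mul_lamLocN hC0 hCt _ _ _ _ _ _ _ (fun D hDc hDv hDZ => ?_)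
  set g : ℕ × Set X1 → ℕ × Set X1 := fun p => (M * p.1, p.2) with hg
  have hginj : Function.Injective g := by
    intro p q hpq
    simp only [hg, Prod.mk.injEq] at hpq
    exact Prod.ext (Nat.eq_of_mul_eq_mul_left hM hpq.1) hpq.2
  have hle : lamLocN T1 a 𝒱 f s N Z
      ≤ ∑' q : ↥(g '' D), pterm T1 f (a 0) s q.1.1 q.1.2 := by
    rw [lamLocN]
    refine iInf_le_of_le (g '' D) (iInf_le_of_le (hDc.image g)
      (iInf_le_of_le ?_ (iInf_le_of_le ?_ le_rfl)))
    · rintro q ⟨p, hpD, rfl⟩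
      obtain ⟨hN, hmeas, B, hBJ, hsub⟩ := hDv p hpD
      refine ⟨le_trans hN (Nat.le_mul_of_pos_left p.1 hM), hmeas, ?_⟩
      obtain ⟨B', hB', hBB'⟩ := jointFiber_d1 hc hM hBJ
      exact ⟨B', hB', hsub.trans hBB'⟩
    · intro z hz
      obtain ⟨p, hpD, hzp⟩ := Set.mem_iUnion₂.1 (hDZ hz)
      exact Set.mem_iUnion₂.2 ⟨g p, Set.mem_image_of_mem g hpD, hzp⟩
  refine hle.trans ?_
  have hsum : ∑' q : ↥(g '' D), pterm T1 f (a 0) s q.1.1 q.1.2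
      = ∑' p : ↥D, pterm T1 f (a 0) s (M * p.1.1) p.1.2 := by
    rw [← Equiv.tsum_eq (Equiv.Set.image g D hginj)
      (fun q => pterm T1 f (a 0) s q.1.1 q.1.2)]
    refine tsum_congr fun p => ?_
    simp only [Equiv.Set.image_apply]
    rfl
  rw [hsum, ← ENNReal.tsum_mul_left]
  exact ENNReal.tsum_le_tsum fun p => pterm_d1 hF hF0 ha1 s M p.1.1 p.1.2

theorem lamLocN_d2 [NeZero k] [MeasurableSpace X1] {T1 : X1 → X1} (hT1 : Measurable T1)
    {a : Fin k → ℝ} (ha1 : 0 < a 0) (hc : ∀ i, 0 ≤ cw a i) (𝒱 : Fin k → Set (Set X1))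
    (hVfin : ∀ i, (𝒱 i).Finite) (hVmeas : ∀ i, ∀ V ∈ 𝒱 i, MeasurableSet V)
    (hVcov : ∀ i, ⋃₀ 𝒱 i = Set.univ) (hX : Nonempty X1)
    {f : X1 → ℝ} {F : ℝ} (hF : ∀ x, |f x| ≤ F) (hF0 : 0 ≤ F) {M : ℕ} (hM : 0 < M)
    (s : ℝ) (Z : Set X1) :
    ∃ C : ℝ≥0∞, C ≠ 0 ∧ C ≠ ⊤ ∧ ∀ N : ℕ,
      lamLocN (T1^[M]) a (fun i => covJoinT T1 (𝒱 i) M) (birk T1 f M) ((M:ℝ)*s) N Z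
        ≤ C * lamLocN T1 a 𝒱 f s (M*N) Z := by
  classical
  letI : ∀ i, Fintype ↥(𝒱 i) := fun i => (hVfin i).fintype
  haveI hιne : ∀ i, Nonempty ↥(𝒱 i) := by
    intro i
    obtain ⟨x⟩ := hX
    have hx : x ∈ ⋃₀ 𝒱 i := by rw [hVcov i]; trivial
    obtain ⟨V, hV, -⟩ := hx
    exact ⟨⟨V, hV⟩⟩
  set ι := (∀ i : Fin k, Fin (⌈(cw a i + 1)*(M:ℝ)⌉₊) → ↥(𝒱 i)) with hι
  set C2 := ENNReal.ofReal (Real.exp ((abs s)*M + (⌈((a 0)+1)*(M:ℝ)⌉₊:ℝ)*F/(a 0))) with hC2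
  have hC20 : C2 ≠ 0 := by
    simp only [hC2, ne_eq, ENNReal.ofReal_eq_zero, not_le]
    exact Real.exp_pos _
  have hC2t : C2 ≠ ⊤ := ENNReal.ofReal_ne_top
  set C := (Fintype.card ι : ℝ≥0∞) * C2 with hCdef
  have hcard : 0 < Fintype.card ι := Fintype.card_pos
  have hC0 : C ≠ 0 := by
    simp only [hCdef, ne_eq, mul_eq_zero, not_or]
    exact ⟨by exact_mod_cast hcard.ne', hC20⟩
  have hCt : C ≠ ⊤ := ENNReal.mul_ne_top (ENNReal.natCast_ne_top _) hC2t
  refine ⟨C, hC0, hCt, fun N => ?_⟩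
  refine le_mul_lamLocN hC0 hCt _ _ _ _ _ _ _ (fun D hDc hDv hDZ => ?_)
  have hfam : ∀ p : ↥D, ∃ Cf : ι → Set X1,
      (∀ t, Cf t ∈ jointFiber (T1^[M]) a (fun i => covJoinT T1 (𝒱 i) M) (p.1.1 / M + 1)
          ∧ MeasurableSet (Cf t)) ∧ p.1.2 ⊆ ⋃ t, Cf t := by
    intro p
    obtain ⟨hN, hmeas, B, hBJ, hsub⟩ := hDv p.1 p.2
    exact jointFiber_d2 hT1 hc hVmeas hVcov hM hsub hBJ
  choose Cf hCf1 hCf2 using hfam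
  haveI : Countable ↥D := hDc.to_subtype
  set σt := (Σ p : ↥D, {t : ι // (p.1.2 ∩ Cf p t).Nonempty}) with hσ
  set G : σt → ℕ × Set X1 := fun q => (q.1.1.1 / M + 1, q.1.1.2 ∩ Cf q.1 q.2.1) with hG
  set D' := Set.range G with hD'
  set FM : ℕ × Set X1 → ℝ≥0∞ :=
    fun pr => pterm (T1^[M]) (birk T1 f M) (a 0) ((M:ℝ)*s) pr.1 pr.2 with hFM
  have hle : lamLocN (T1^[M]) a (fun i => covJoinT T1 (𝒱 i) M) (birk T1 f M) ((M:ℝ)*s) N Z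
      ≤ ∑' q : ↥D', FM q.1 := by
    rw [lamLocN]
    refine iInf_le_of_le D' (iInf_le_of_le (Set.countable_range G)
      (iInf_le_of_le ?_ (iInf_le_of_le ?_ le_rfl)))
    · rintro q ⟨σ, rfl⟩
      obtain ⟨hN, hmeas, B, hBJ, hsub⟩ := hDv σ.1.1 σ.1.2
      refine ⟨?_, hmeas.inter (hCf1 σ.1 σ.2.1).2,
        ⟨Cf σ.1 σ.2.1, (hCf1 σ.1 σ.2.1).1, Set.inter_subset_right⟩⟩
      have h2 : N ≤ σ.1.1.1 / M := (Nat.le_div_iff_mul_le hM).2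
        (by rw [Nat.mul_comm]; exact hN)
      exact le_trans h2 (Nat.le_succ _)
    · intro z hz
      obtain ⟨p, hpD, hzp⟩ := Set.mem_iUnion₂.1 (hDZ hz)
      obtain ⟨t, hzt⟩ := Set.mem_iUnion.1 (hCf2 ⟨p, hpD⟩ hzp)
      refine Set.mem_iUnion₂.2 ⟨G ⟨⟨p, hpD⟩, ⟨t, ⟨z, hzp, hzt⟩⟩⟩, ⟨_, rfl⟩, ⟨hzp, hzt⟩⟩
  refine hle.trans ?_
  have hG' : Function.Surjective (fun σ : σt => (⟨G σ, Set.mem_range_self σ⟩ : ↥D')) := by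
    rintro ⟨q, σ, rfl⟩
    exact ⟨σ, rfl⟩
  have hs1 : ∑' q : ↥D', FM q.1 ≤ ∑' σ : σt, FM (G σ) :=
    ENNReal.tsum_le_tsum_comp_of_surjective hG' (fun q => FM q.1)
  refine hs1.trans ?_
  rw [ENNReal.tsum_sigma' (fun σ : σt => FM (G σ))]
  have hinner : ∀ p : ↥D, ∑' t : {t : ι // (p.1.2 ∩ Cf p t).Nonempty}, FM (G ⟨p, t⟩)
      ≤ (Fintype.card ι : ℝ≥0∞) * (C2 * pterm T1 f (a 0) s p.1.1 p.1.2) := by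
    intro p
    have hbd : ∀ t : {t : ι // (p.1.2 ∩ Cf p t).Nonempty},
        FM (G ⟨p, t⟩) ≤ C2 * pterm T1 f (a 0) s p.1.1 p.1.2 := by
      intro t
      have hdb := div_succ_bounds (m := p.1.1) hM
      exact pterm_d2 hF hF0 ha1 s hM hdb.1 hdb.2 Set.inter_subset_left t.2
    calc ∑' t : {t : ι // (p.1.2 ∩ Cf p t).Nonempty}, FM (G ⟨p, t⟩)
        ≤ ∑' _t : {t : ι // (p.1.2 ∩ Cf p t).Nonempty},
            (C2 * pterm T1 f (a 0) s p.1.1 p.1.2) := ENNReal.tsum_le_tsum hbd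
    _ = (Fintype.card {t : ι // (p.1.2 ∩ Cf p t).Nonempty} : ℝ≥0∞)
          * (C2 * pterm T1 f (a 0) s p.1.1 p.1.2) := by
        rw [tsum_fintype, Finset.sum_const, nsmul_eq_mul, Finset.card_univ]
    _ ≤ (Fintype.card ι : ℝ≥0∞) * (C2 * pterm T1 f (a 0) s p.1.1 p.1.2) := by
        refine mul_le_mul_left ?_ _
        exact_mod_cast Fintype.card_subtype_le _
  calc ∑' p : ↥D, ∑' t : {t : ι // (p.1.2 ∩ Cf p t).Nonempty}, FM (G ⟨p, t⟩)
      ≤ ∑' p : ↥D, (Fintype.card ι : ℝ≥0∞) * (C2 * pterm T1 f (a 0) s p.1.1 p.1.2) :=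
        ENNReal.tsum_le_tsum hinner
  _ = C * ∑' p : ↥D, pterm T1 f (a 0) s p.1.1 p.1.2 := by
      rw [ENNReal.tsum_mul_left, ENNReal.tsum_mul_left, hCdef, mul_assoc]

/-! lamLoc zero sets -/

theorem lamLoc_zero_iff [NeZero k] [MeasurableSpace X1] {T1 : X1 → X1} (hT1 : Measurable T1)
    {a : Fin k → ℝ} (ha1 : 0 < a 0) (hc : ∀ i, 0 ≤ cw a i) (𝒱 : Fin k → Set (Set X1))
    (hVfin : ∀ i, (𝒱 i).Finite) (hVmeas : ∀ i, ∀ V ∈ 𝒱 i, MeasurableSet V)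
    (hVcov : ∀ i, ⋃₀ 𝒱 i = Set.univ) (hX : Nonempty X1)
    {f : X1 → ℝ} {F : ℝ} (hF : ∀ x, |f x| ≤ F) (hF0 : 0 ≤ F) {M : ℕ} (hM : 0 < M)
    (s : ℝ) (Z : Set X1) :
    lamLoc T1 a 𝒱 f s Z = 0 ↔
      lamLoc (T1^[M]) a (fun i => covJoinT T1 (𝒱 i) M) (birk T1 f M) ((M:ℝ)*s) Z = 0 := by
  constructor
  · intro h0
    obtain ⟨C, hC0, hCt, hC⟩ := lamLocN_d2 hT1 ha1 hc 𝒱 hVfin hVmeas hVcov hX hF hF0 hM s Z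
    rw [lamLoc] at h0
    rw [lamLoc, ENNReal.iSup_eq_zero]
    intro N
    have hz : lamLocN T1 a 𝒱 f s (M*N) Z = 0 := (ENNReal.iSup_eq_zero.1 h0) (M*N)
    have := hC N
    rw [hz, mul_zero] at this
    exact le_antisymm this zero_le
  · intro h0
    rw [lamLoc] at h0
    rw [lamLoc, ENNReal.iSup_eq_zero]
    intro N
    have hz : lamLocN (T1^[M]) a (fun i => covJoinT T1 (𝒱 i) M) (birk T1 f M) ((M:ℝ)*s) N Z
        = 0 := (ENNReal.iSup_eq_zero.1 h0) N
    have := lamLocN_d1 (T1 := T1) ha1 hc 𝒱 hF hF0 hM s N Z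
    rw [hz, mul_zero] at this
    exact le_antisymm this zero_le

/-! EReal infimum lemmas -/

theorem sInf_toEReal_of_bddBelow {S : Set ℝ} (hS : S.Nonempty) (hbb : BddBelow S) :
    sInf (Real.toEReal '' S) = ((sInf S : ℝ) : EReal) := by
  refine le_antisymm ?_ (le_sInf ?_)
  · by_contra hlt
    push_neg at hlt
    obtain ⟨r, hr1, hr2⟩ := EReal.exists_between_coe_real hlt
    have hsr : sInf S < r := by exact_mod_cast hr1
    obtain ⟨x, hxS, hxr⟩ := (csInf_lt_iff hbb hS).1 hsr
    have h1 : sInf (Real.toEReal '' S) ≤ (x : EReal) := sInf_le ⟨x, hxS, rfl⟩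
    have h2 : (x : EReal) < r := by exact_mod_cast hxr
    exact absurd (h1.trans_lt (h2.trans hr2)) (lt_irrefl _)
  · rintro y ⟨x, hxS, rfl⟩
    exact_mod_cast csInf_le hbb hxS

theorem sInf_toEReal_of_unbdd {S : Set ℝ} (hbb : ¬ BddBelow S) :
    sInf (Real.toEReal '' S) = ⊥ := by
  have hS : S.Nonempty := by
    by_contra h
    rw [Set.not_nonempty_iff_eq_empty] at h
    exact hbb (h ▸ bddBelow_empty)
  rw [sInf_eq_bot]
  intro b hb
  induction b with
  | bot => exact absurd hb (lt_irrefl _)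
  | coe r =>
    obtain ⟨x, hxS, hxr⟩ := not_bddBelow_iff.1 hbb r
    exact ⟨(x : EReal), ⟨x, hxS, rfl⟩, by exact_mod_cast hxr⟩
  | top =>
    obtain ⟨x, hxS⟩ := hS
    exact ⟨(x : EReal), ⟨x, hxS, rfl⟩, EReal.coe_lt_top x⟩

theorem sInf_toEReal_scale (S : Set ℝ) {M : ℝ} (hM : 0 < M) :
    sInf (Real.toEReal '' ((fun x => M * x) '' S)) = (M : EReal) * sInf (Real.toEReal '' S) := by
  rcases S.eq_empty_or_nonempty with rfl | hS
  · rw [Set.image_empty, Set.image_empty, sInf_empty, EReal.coe_mul_top_of_pos hM]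
  by_cases hbb : BddBelow S
  · have h2 : BddBelow ((fun x => M*x) '' S) := by
      obtain ⟨b, hb⟩ := hbb
      exact ⟨M*b, by rintro y ⟨x, hx, rfl⟩; exact mul_le_mul_of_nonneg_left (hb hx) hM.le⟩
    rw [sInf_toEReal_of_bddBelow (hS.image _) h2, sInf_toEReal_of_bddBelow hS hbb]
    have he : sInf ((fun x => M*x) '' S) = M * sInf S := by
      have h3 := Real.sInf_smul_of_nonneg hM.le S
      have h4 : (fun x => M*x) '' S = M • S := by
        ext y
        simp [Set.mem_smul_set, smul_eq_mul]
      rw [h4, h3, smul_eq_mul]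
    rw [he, EReal.coe_mul]
  · have h2 : ¬ BddBelow ((fun x => M*x) '' S) := by
      rintro ⟨b, hb⟩
      refine hbb ⟨b/M, fun x hx => ?_⟩
      have hbx : b ≤ M * x := hb ⟨x, hx, rfl⟩
      rw [div_le_iff₀ hM]
      linarith
    rw [sInf_toEReal_of_unbdd h2, sInf_toEReal_of_unbdd hbb, EReal.coe_mul_bot_of_pos hM]

theorem ereal_inv_mul {M : ℝ} (hM : 0 < M) (x : EReal) :
    x = ((M⁻¹ : ℝ) : EReal) * ((M : EReal) * x) := by
  induction x with
  | bot => rw [EReal.coe_mul_bot_of_pos hM, EReal.coe_mul_bot_of_pos (inv_pos.2 hM)]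
  | coe r =>
    rw [← EReal.coe_mul, ← EReal.coe_mul, ← mul_assoc, inv_mul_cancel₀ hM.ne', one_mul]
  | top => rw [EReal.coe_mul_top_of_pos hM, EReal.coe_mul_top_of_pos (inv_pos.2 hM)]

/-! abstract power rule -/

theorem PLoc_pow [NeZero k] [MeasurableSpace X1] {T1 : X1 → X1} (hT1 : Measurable T1)
    {a : Fin k → ℝ} (ha1 : 0 < a 0) (ha : ∀ i, 0 ≤ a i) (𝒱 : Fin k → Set (Set X1))
    (hVfin : ∀ i, (𝒱 i).Finite) (hVmeas : ∀ i, ∀ V ∈ 𝒱 i, MeasurableSet V)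
    (hVcov : ∀ i, ⋃₀ 𝒱 i = Set.univ)
    {f : X1 → ℝ} {F : ℝ} (hF : ∀ x, |f x| ≤ F) (hF0 : 0 ≤ F) {M : ℕ} (hM : 0 < M)
    (Z : Set X1) :
    PLoc T1 a 𝒱 Z f = (((M:ℝ)⁻¹ : ℝ) : EReal) *
      PLoc (T1^[M]) a (fun i => covJoinT T1 (𝒱 i) M) Z (birk T1 f M) := by
  have hc : ∀ i, 0 ≤ cw a i := fun i => Finset.sum_nonneg fun j _ => ha j
  have hMR : (0:ℝ) < (M:ℝ) := by exact_mod_cast hM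
  rcases Z.eq_empty_or_nonempty with rfl | hZne
  · have hzero : ∀ (T' : X1 → X1) (𝒱' : Fin k → Set (Set X1)) (f' : X1 → ℝ) (s : ℝ),
        lamLoc T' a 𝒱' f' s (∅ : Set X1) = 0 := by
      intro T' 𝒱' f' s
      rw [lamLoc]
      refine le_antisymm (iSup_le fun N => ?_) zero_le
      refine iInf_le_of_le ∅ (iInf_le_of_le Set.countable_empty
        (iInf_le_of_le (by simp) (iInf_le_of_le (by simp) ?_)))
      rw [tsum_empty]
    have huniv : ∀ (T' : X1 → X1) (𝒱' : Fin k → Set (Set X1)) (f' : X1 → ℝ),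
        {s : ℝ | lamLoc T' a 𝒱' f' s (∅ : Set X1) = 0} = Set.univ := by
      intro T' 𝒱' f'
      exact Set.eq_univ_of_forall fun s => hzero T' 𝒱' f' s
    have hbot : sInf (Real.toEReal '' (Set.univ : Set ℝ)) = ⊥ := by
      refine sInf_toEReal_of_unbdd ?_
      rintro ⟨b, hb⟩
      have := hb (Set.mem_univ (b-1))
      linarith
    rw [PLoc, PLoc, huniv, huniv, hbot, EReal.coe_mul_bot_of_pos (inv_pos.2 hMR)]
  · have hX : Nonempty X1 := ⟨hZne.choose⟩
    have hiff := fun s => lamLoc_zero_iff hT1 ha1 hc 𝒱 hVfin hVmeas hVcov hX hF hF0 hM s Z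
    have hSet : {s : ℝ | lamLoc (T1^[M]) a (fun i => covJoinT T1 (𝒱 i) M)
          (birk T1 f M) s Z = 0}
        = (fun x => (M:ℝ) * x) '' {s : ℝ | lamLoc T1 a 𝒱 f s Z = 0} := by
      ext s'
      simp only [Set.mem_setOf_eq, Set.mem_image]
      constructor
      · intro h
        refine ⟨s'/(M:ℝ), ?_, by field_simp⟩
        refine (hiff (s'/(M:ℝ))).2 ?_
        rwa [show (M:ℝ)*(s'/(M:ℝ)) = s' from by field_simp]
      · rintro ⟨s, hs, rfl⟩
        exact (hiff s).1 hs
    rw [PLoc, PLoc, hSet, sInf_toEReal_scale _ hMR]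
    exact ereal_inv_mul hMR _

end PowerAux

/-- power rule for the local 𝐚-weighted pressure:
`P^𝐚(T₁, Z, {𝒰_i}, f) = (1/M) · P^𝐚(T₁^M, Z, {(𝒰_i)_0^{M-1}}, S_M f)`. -/
theorem local_weighted_pressure_power
    {k : ℕ} [NeZero k]
    (X : Fin k → Type) [∀ i, MetricSpace (X i)] [∀ i, CompactSpace (X i)]
    [∀ i, MeasurableSpace (X i)] [∀ i, BorelSpace (X i)]
    (T : ∀ i, X i → X i) (hT : ∀ i, Continuous (T i))
    (τ : ∀ i, X 0 → X i) (hτ0 : τ 0 = id)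
    (hτc : ∀ i, Continuous (τ i)) (hτs : ∀ i, Function.Surjective (τ i))
    (hτe : ∀ i, τ i ∘ T 0 = T i ∘ τ i)
    (hchain : ∀ i j : Fin k, i ≤ j → ∃ p : X i → X j,
        Continuous p ∧ p ∘ T i = T j ∘ p ∧ p ∘ τ i = τ j)
    (a : Fin k → ℝ) (ha1 : 0 < a 0) (ha : ∀ i, 0 ≤ a i)
    (M : ℕ) (hM : 0 < M) (Z : Set (X 0)) (f : X 0 → ℝ) (hf : Continuous f)
    (𝒰 : ∀ i, Set (Set (X i))) (h𝒰 : ∀ i, IsOpenCover (𝒰 i)) :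
    PLoc (T 0) a (fun i => pullCov (τ i) (𝒰 i)) Z f
      = (((M : ℝ)⁻¹ : ℝ) : EReal) *
        PLoc ((T 0)^[M]) a (fun i => pullCov (τ i) (covJoinT (T i) (𝒰 i) M)) Z
          (birk (T 0) f M) := by
  classical
  have hcomm : ∀ (i : Fin k) (l : ℕ) (x : X 0), τ i ((T 0)^[l] x) = (T i)^[l] (τ i x) := by
    intro i l
    induction l with
    | zero => intro x; rfl
    | succ l ih =>
      intro x
      rw [Function.iterate_succ_apply, Function.iterate_succ_apply]
      calc τ i ((T 0)^[l] (T 0 x)) = (T i)^[l] (τ i (T 0 x)) := ih (T 0 x)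
      _ = (T i)^[l] (T i (τ i x)) := congrArg ((T i)^[l]) (congrFun (hτe i) x)
  obtain ⟨F, hF, hF0⟩ : ∃ F, (∀ x, |f x| ≤ F) ∧ 0 ≤ F := by
    rcases isEmpty_or_nonempty (X 0) with hX | hX
    · exact ⟨0, fun x => (hX.false x).elim, le_refl 0⟩
    · obtain ⟨x0, -, hx0⟩ := IsCompact.exists_isMaxOn (isCompact_univ (X := X 0))
        ⟨Classical.arbitrary _, Set.mem_univ _⟩ (continuous_abs.comp hf).continuousOn
      exact ⟨max (|f x0|) 0, fun x => le_trans (hx0 (Set.mem_univ x)) (le_max_left _ _),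
        le_max_right _ _⟩
  have hT1m : Measurable (T 0) := (hT 0).measurable
  have hVfin : ∀ i, (pullCov (τ i) (𝒰 i)).Finite := fun i => (h𝒰 i).1.image _
  have hVmeas : ∀ i, ∀ V ∈ pullCov (τ i) (𝒰 i), MeasurableSet V := by
    rintro i V ⟨U, hU, rfl⟩
    exact (((h𝒰 i).2.1 U hU).preimage (hτc i)).measurableSet
  have hVcov : ∀ i, ⋃₀ pullCov (τ i) (𝒰 i) = Set.univ := by
    intro i
    refine Set.eq_univ_of_forall fun x => ?_
    have hx : τ i x ∈ ⋃₀ 𝒰 i := by rw [(h𝒰 i).2.2]; trivial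
    obtain ⟨U, hU, hm⟩ := hx
    exact ⟨τ i ⁻¹' U, ⟨U, hU, rfl⟩, hm⟩
  have hcovEq : (fun i => pullCov (τ i) (covJoinT (T i) (𝒰 i) M))
      = (fun i => covJoinT (T 0) (pullCov (τ i) (𝒰 i)) M) := by
    funext i
    ext A
    constructor
    · rintro ⟨A', ⟨u, hu, rfl⟩, rfl⟩
      refine ⟨fun l => τ i ⁻¹' u l, fun l hl => ⟨u l, hu l hl, rfl⟩, ?_⟩
      ext x
      simp only [Set.mem_preimage, Set.mem_iInter]
      refine forall_congr' fun l => forall_congr' fun hl => ?_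
      rw [hcomm i l x]
    · rintro ⟨v, hv, rfl⟩
      choose U hU1 hU2 using hv
      set W : ℕ → Set (X i) := fun l => if h : l < M then U l h else Set.univ with hW
      refine ⟨⋂ l ∈ Finset.range M, (T i)^[l] ⁻¹' W l,
        ⟨W, fun l hl => by simp only [hW, dif_pos hl]; exact hU1 l hl, rfl⟩, ?_⟩
      ext x
      simp only [Set.mem_preimage, Set.mem_iInter, Finset.mem_range]
      refine forall_congr' fun l => forall_congr' fun hl => ?_
      simp only [hW, dif_pos hl]
      rw [← hcomm i l x, ← hU2 l hl]
      exact Iff.rfl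
  rw [hcovEq]
  exact PLoc_pow hT1m ha1 ha _ hVfin hVmeas hVcov hF hF0 hM Z


end WTP
end
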